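/- Let A be an n×n matrix over ℚ and 1 ≤ k ≤ n. Then k! · J_k(A) = Σ_{σ ∈ S_k} sgn(σ) · Σ_{f : {1,…,k} → {1,…,n}} ∏_{m=1}^{k} A_{f(m), f(σ(m))}, where the inner sum runs over all functions f from {1,…,k} to the index set {1,…,n}. -/

import Mathlib

/-- The `k`-th prodeterminant of an `n × n` matrix: `(−1)^k` times the coefficient of
`λ^(n−k)` in the characteristic polynomial `det (λ·I − A)`. -/
noncomputable def prodet {n : ℕ} (A : Matrix (Fin n) (Fin n) ℚ) (k : ℕ) : ℚ :=
  (-1) ^ k * A.charpoly.coeff (n - k)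

open Matrix Polynomial Finset

/-- Principal minor of `A` on the index set `s`. -/
noncomputable def pminor {n : ℕ} (A : Matrix (Fin n) (Fin n) ℚ) (s : Finset (Fin n)) : ℚ :=
  (A.submatrix (fun i : {x // x ∈ s} => (i : Fin n)) (fun i : {x // x ∈ s} => (i : Fin n))).det

lemma det_piecewise_one (n : ℕ) (B : Matrix (Fin n) (Fin n) ℚ[X]) (s : Finset (Fin n)) :
    Matrix.det (Matrix.of (s.piecewise (1 : Matrix (Fin n) (Fin n) ℚ[X]) B)) =
      (B.submatrix (fun i : {x // x ∉ s} => (i : Fin n)) (fun i : {x // x ∉ s} => (i : Fin n))).det := by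
  classical
  let e : {x // x ∈ s} ⊕ {x // x ∉ s} ≃ Fin n := Equiv.sumCompl (· ∈ s)
  rw [← Matrix.det_submatrix_equiv_self e]
  have hblocks : (Matrix.of (s.piecewise (1 : Matrix (Fin n) (Fin n) ℚ[X]) B)).submatrix e e =
      Matrix.fromBlocks 1 0
        (Matrix.of fun (i : {x // x ∉ s}) (j : {x // x ∈ s}) => B i j)
        (Matrix.of fun (i : {x // x ∉ s}) (j : {x // x ∉ s}) => B i j) := by
    ext i j : 1
    cases i with
    | inl i =>
      cases j with
      | inl j =>
        simp only [submatrix_apply, Equiv.sumCompl_apply_inl, e, Matrix.of_apply,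
          Finset.piecewise, i.2, if_true, fromBlocks_apply₁₁]
        by_cases hij : (i : Fin n) = (j : Fin n)
        · rw [hij, Matrix.one_apply_eq, Subtype.ext hij, Matrix.one_apply_eq]
        · rw [Matrix.one_apply_ne hij, Matrix.one_apply_ne (fun h => hij (by rw [h]))]
      | inr j =>
        have hij : (i : Fin n) ≠ (j : Fin n) := fun h => j.2 (h ▸ i.2)
        simp only [submatrix_apply, Equiv.sumCompl_apply_inl, Equiv.sumCompl_apply_inr, e,
          Matrix.of_apply, Finset.piecewise, i.2, if_true, fromBlocks_apply₁₂,
          Matrix.one_apply_ne hij, Matrix.zero_apply]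
    | inr i =>
      cases j with
      | inl j =>
        simp [e, Finset.piecewise, i.2]
      | inr j =>
        simp [e, Finset.piecewise, i.2]
  rw [hblocks, Matrix.det_fromBlocks_zero₁₂, Matrix.det_one, one_mul]
  rfl

lemma det_charmatrix_expand {n : ℕ} (A : Matrix (Fin n) (Fin n) ℚ) :
    (charmatrix A).det =
      ∑ s : Finset (Fin n),
        X ^ s.card * ((-1 : ℚ[X]) ^ (n - s.card) * C (pminor A sᶜ)) := by
  classical
  set B : Matrix (Fin n) (Fin n) ℚ[X] := -(A.map C) with hB
  have hrow : charmatrix A = (X : ℚ[X]) • (1 : Matrix (Fin n) (Fin n) ℚ[X]) + B := by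
    ext i j
    by_cases hij : i = j
    · subst hij; simp [charmatrix_apply_eq, Matrix.one_apply_eq, sub_eq_add_neg, hB]
    · simp [charmatrix_apply_ne _ _ _ hij, Matrix.one_apply_ne hij, hB]
  rw [hrow]
  have hdet : Matrix.det ((X : ℚ[X]) • (1 : Matrix (Fin n) (Fin n) ℚ[X]) + B) =
      ∑ s : Finset (Fin n),
        Matrix.det (Matrix.of (s.piecewise ((X : ℚ[X]) • (1 : Matrix (Fin n) (Fin n) ℚ[X])) B)) :=
    Matrix.detRowAlternating.toMultilinearMap.map_add_univ
      ((X : ℚ[X]) • (1 : Matrix (Fin n) (Fin n) ℚ[X])) B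
  rw [hdet]
  refine Finset.sum_congr rfl fun s _ => ?_
  have hpw : s.piecewise ((X : ℚ[X]) • (1 : Matrix (Fin n) (Fin n) ℚ[X])) B =
      s.piecewise (fun i => (X : ℚ[X]) • (s.piecewise (1 : Matrix (Fin n) (Fin n) ℚ[X]) B) i)
        (s.piecewise (1 : Matrix (Fin n) (Fin n) ℚ[X]) B) := by
    funext i
    by_cases hi : i ∈ s
    · funext j
      simp [Finset.piecewise, hi, Matrix.smul_apply]
    · simp [Finset.piecewise, hi]
  have h1 : Matrix.det (Matrix.of (s.piecewise ((X : ℚ[X]) • (1 : Matrix (Fin n) (Fin n) ℚ[X])) B)) =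
      (∏ _i ∈ s, (X : ℚ[X])) •
        Matrix.det (Matrix.of (s.piecewise (1 : Matrix (Fin n) (Fin n) ℚ[X]) B)) := by
    rw [show Matrix.of (s.piecewise ((X : ℚ[X]) • (1 : Matrix (Fin n) (Fin n) ℚ[X])) B) =
      Matrix.of (s.piecewise (fun i => (X : ℚ[X]) • (s.piecewise (1 : Matrix (Fin n) (Fin n) ℚ[X]) B) i)
        (s.piecewise (1 : Matrix (Fin n) (Fin n) ℚ[X]) B)) from congrArg _ hpw]
    exact Matrix.detRowAlternating.toMultilinearMap.map_piecewise_smul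
      (fun _ => (X : ℚ[X])) _ s
  rw [h1, Finset.prod_const, smul_eq_mul, det_piecewise_one]
  congr 1
  -- compute det of the lower-right block
  have hBsub : B.submatrix (fun i : {x // x ∉ s} => (i : Fin n))
      (fun i : {x // x ∉ s} => (i : Fin n)) =
      -((A.map C).submatrix (fun i : {x // x ∉ s} => (i : Fin n))
        (fun i : {x // x ∉ s} => (i : Fin n))) := by
    ext i j; simp [hB]
  have hcard : Fintype.card {x : Fin n // x ∉ s} = n - s.card := by
    rw [Fintype.card_subtype_compl]
    simp [Fintype.card_coe]
  rw [hBsub, Matrix.det_neg, hcard]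
  congr 1
  rw [Matrix.submatrix_map, ← RingHom.mapMatrix_apply, ← RingHom.map_det]
  congr 1
  -- the minor over {x // x ∉ s} equals pminor A sᶜ
  unfold pminor
  rw [← Matrix.det_submatrix_equiv_self
    (Equiv.subtypeEquivRight (fun x : Fin n => (Finset.mem_compl (s := s) (a := x))))
    (A.submatrix (fun i : {x // x ∉ s} => (i : Fin n)) (fun i : {x // x ∉ s} => (i : Fin n))),
    Matrix.submatrix_submatrix]
  congr 1 <;> funext i <;> simp [Equiv.subtypeEquivRight, Equiv.subtypeEquiv]

lemma charpoly_coeff_eq {n k : ℕ} (hkn : k ≤ n) (A : Matrix (Fin n) (Fin n) ℚ) :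
    A.charpoly.coeff (n - k) =
      (-1 : ℚ) ^ k * ∑ t : Finset (Fin n), if t.card = k then pminor A t else 0 := by
  classical
  rw [Matrix.charpoly, det_charmatrix_expand, finset_sum_coeff]
  have hterm : ∀ s : Finset (Fin n),
      (X ^ s.card * ((-1 : ℚ[X]) ^ (n - s.card) * C (pminor A sᶜ))).coeff (n - k) =
      if s.card = n - k then (-1 : ℚ) ^ (n - s.card) * pminor A sᶜ else 0 := by
    intro s
    have : X ^ s.card * ((-1 : ℚ[X]) ^ (n - s.card) * C (pminor A sᶜ)) =
        C ((-1 : ℚ) ^ (n - s.card) * pminor A sᶜ) * X ^ s.card := by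
      rw [_root_.map_mul, _root_.map_pow, _root_.map_neg, Polynomial.C_1]; ring
    rw [this, coeff_C_mul, coeff_X_pow]
    by_cases h : s.card = n - k
    · simp [h]
    · simp [Ne.symm h, h]
  rw [Finset.sum_congr rfl (fun s _ => hterm s)]
  -- reindex by complement
  rw [Finset.mul_sum]
  refine Fintype.sum_bijective (fun s : Finset (Fin n) => sᶜ)
    (Function.Involutive.bijective (fun s => compl_compl s)) _ _ (fun s => ?_)
  have hs : s.card ≤ n := by
    simpa using Finset.card_le_card (Finset.subset_univ s)
  have hcc : sᶜ.card = n - s.card := by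
    rw [Finset.card_compl]; simp
  by_cases h : s.card = n - k
  · have h2 : sᶜ.card = k := by omega
    rw [if_pos h, if_pos h2]
    have : n - s.card = k := by omega
    rw [this]
  · have h2 : sᶜ.card ≠ k := by omega
    rw [if_neg h, if_neg h2, mul_zero]

lemma inner_det {n k : ℕ} (A : Matrix (Fin n) (Fin n) ℚ) (f : Fin k → Fin n) :
    ∑ σ : Equiv.Perm (Fin k), ((Equiv.Perm.sign σ : ℤ) : ℚ) * ∏ m : Fin k, A (f m) (f (σ m)) =
      (A.submatrix f f).det := by
  rw [← Matrix.det_transpose, Matrix.det_apply]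
  refine Finset.sum_congr rfl fun σ _ => ?_
  rw [Units.smul_def, zsmul_eq_mul]
  congr 1

lemma sum_det_submatrix {n k : ℕ} (hkn : k ≤ n) (A : Matrix (Fin n) (Fin n) ℚ) :
    ∑ f : Fin k → Fin n, (A.submatrix f f).det =
      (k.factorial : ℚ) * ∑ t : Finset (Fin n), if t.card = k then pminor A t else 0 := by
  classical
  -- kill non-injective f
  rw [← Finset.sum_filter_add_sum_filter_not Finset.univ (fun f => Function.Injective f)]
  have hnoninj : ∑ f ∈ Finset.univ.filter (fun f : Fin k → Fin n => ¬ Function.Injective f),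
      (A.submatrix f f).det = 0 := by
    refine Finset.sum_eq_zero fun f hf => ?_
    rw [Finset.mem_filter, Function.Injective] at hf
    push_neg at hf
    obtain ⟨i, j, hij, hne⟩ := hf.2
    exact Matrix.det_zero_of_row_eq hne (funext fun m => by simp [Matrix.submatrix_apply, hij])
  rw [hnoninj, add_zero]
  -- fiberwise over images
  rw [← Finset.sum_fiberwise (Finset.univ.filter (fun f : Fin k → Fin n => Function.Injective f))
      (fun f => Finset.image f Finset.univ) (fun f => (A.submatrix f f).det)]
  rw [Finset.mul_sum]
  refine Finset.sum_congr rfl fun t _ => ?_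
  by_cases ht : t.card = k
  · rw [if_pos ht]
    have hcardt : Fintype.card {x // x ∈ t} = k := by
      simpa [Fintype.card_coe] using ht
    -- sum over the fiber equals k! * pminor
    have key : ∑ f ∈ (Finset.univ.filter (fun f : Fin k → Fin n => Function.Injective f)).filter
        (fun f => Finset.image f Finset.univ = t), (A.submatrix f f).det =
        ∑ _e : Fin k ≃ {x // x ∈ t}, pminor A t := by
      refine (Finset.sum_bij (fun (e : Fin k ≃ {x // x ∈ t}) _ =>
        (fun i => ((e i : {x // x ∈ t}) : Fin n))) ?_ ?_ ?_ ?_).symm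
      · intro e _
        simp only [Finset.mem_filter, Finset.mem_univ, true_and]
        constructor
        · exact Subtype.coe_injective.comp e.injective
        · ext x
          simp only [Finset.mem_image, Finset.mem_univ, true_and]
          constructor
          · rintro ⟨i, rfl⟩; exact (e i).2
          · intro hx; exact ⟨e.symm ⟨x, hx⟩, by simp⟩
      · intro e1 h1 e2 h2 h
        ext i
        exact congrArg Fin.val (congrFun h i)
      · intro f hf
        simp only [Finset.mem_filter, Finset.mem_univ, true_and] at hf
        obtain ⟨hinj, himg⟩ := hf
        have hmem : ∀ i, f i ∈ t := fun i => himg ▸ Finset.mem_image_of_mem f (Finset.mem_univ i)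
        have hbij : Function.Bijective (fun i => (⟨f i, hmem i⟩ : {x // x ∈ t})) := by
          rw [Fintype.bijective_iff_injective_and_card]
          exact ⟨fun a b hab => hinj (Subtype.ext_iff.mp hab), by simp [hcardt]⟩
        exact ⟨Equiv.ofBijective _ hbij, Finset.mem_univ _, rfl⟩
      · intro e _
        have : A.submatrix (fun i => ((e i : {x // x ∈ t}) : Fin n))
            (fun i => ((e i : {x // x ∈ t}) : Fin n)) =
            (A.submatrix (fun i : {x // x ∈ t} => (i : Fin n))
              (fun i : {x // x ∈ t} => (i : Fin n))).submatrix e e := rfl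
        rw [pminor, this, Matrix.det_submatrix_equiv_self]
    rw [key, Finset.sum_const, Finset.card_univ, Fintype.card_equiv
      (Fintype.equivOfCardEq (by simp [hcardt])), nsmul_eq_mul]
    simp
  · rw [if_neg ht, mul_zero]
    refine Finset.sum_eq_zero fun f hf => ?_
    simp only [Finset.mem_filter, Finset.mem_univ, true_and] at hf
    exfalso
    apply ht
    rw [← hf.2, Finset.card_image_of_injective _ hf.1]
    simp

/-- Prodeterminants as "averages" over traces:
`k! · Jₖ(A) = ∑_{σ ∈ S_k} sgn σ · ∑_{f : {1,…,k} → {1,…,n}} ∏ₘ A_{f(m), f(σ(m))}`,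
the inner sum running over all functions `f` from `{1, …, k}` to the index set. -/
theorem factorial_prodet_eq_sum_perm (n k : ℕ) (hk : 1 ≤ k) (hkn : k ≤ n)
    (A : Matrix (Fin n) (Fin n) ℚ) :
    (k.factorial : ℚ) * prodet A k =
      ∑ σ : Equiv.Perm (Fin k),
        ((Equiv.Perm.sign σ : ℤ) : ℚ) *
          ∑ f : Fin k → Fin n, ∏ m : Fin k, A (f m) (f (σ m)) := by
  classical
  have hswap : ∑ σ : Equiv.Perm (Fin k),
      ((Equiv.Perm.sign σ : ℤ) : ℚ) * ∑ f : Fin k → Fin n, ∏ m : Fin k, A (f m) (f (σ m)) =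
      ∑ f : Fin k → Fin n, (A.submatrix f f).det := by
    simp_rw [Finset.mul_sum]
    rw [Finset.sum_comm]
    exact Finset.sum_congr rfl fun f _ => inner_det A f
  rw [hswap, sum_det_submatrix hkn A, prodet, charpoly_coeff_eq hkn A]
  have h1 : ((-1 : ℚ) ^ k) * (-1 : ℚ) ^ k = 1 := by
    rw [← pow_add]; exact Even.neg_one_pow ⟨k, rfl⟩
  set S := ∑ t : Finset (Fin n), if t.card = k then pminor A t else 0 with hS
  rw [show (k.factorial : ℚ) * ((-1 : ℚ) ^ k * ((-1 : ℚ) ^ k * S)) =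
      (((-1 : ℚ) ^ k) * (-1 : ℚ) ^ k) * ((k.factorial : ℚ) * S) from by ring, h1, one_mul]
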